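/- Let G = (V,E) be a finite simple graph, let L ⊆ V be an independent set, let r ≥ 1 be a natural number, and let V \ L = V_1 ∪ ⋯ ∪ V_r be a partition. Then there exist an index i ∈ {1,…,r} and an independent set S ⊆ V_i such that r · |N(S ∪ (L \ N(S)))| ≥ μ, where μ denotes the maximum size of a minimal vertex cover of G. Consequently, since for any independent set I there is a minimal vertex cover of size at least |N(I)|, there is a minimal vertex cover of G of size at least μ/r obtained from the independent set S ∪ (L \ N(S)). -/

import Mathlib

/-- The open neighborhood of a set `S` of vertices: all vertices having a neighbor in `S`. -/
def nbhd {V : Type*} (G : SimpleGraph V) (S : Set V) : Set V :=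
  {v | ∃ u ∈ S, G.Adj v u}

/-- `C` is a vertex cover: every edge has an endpoint in `C`. -/
def IsVertexCover {V : Type*} (G : SimpleGraph V) (C : Set V) : Prop :=
  ∀ ⦃u v⦄, G.Adj u v → u ∈ C ∨ v ∈ C

/-- `C` is a minimal vertex cover: a vertex cover no proper subset of which is one. -/
def IsMinimalVertexCover {V : Type*} (G : SimpleGraph V) (C : Set V) : Prop :=
  IsVertexCover G C ∧ ∀ D : Set V, D ⊂ C → ¬ IsVertexCover G D

/-- `I` is an independent set: no two of its vertices are adjacent. -/
def IsIndepSet {V : Type*} (G : SimpleGraph V) (I : Set V) : Prop :=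
  ∀ ⦃u⦄, u ∈ I → ∀ ⦃v⦄, v ∈ I → ¬ G.Adj u v

lemma nbhd_mono {V : Type*} {G : SimpleGraph V} {S T : Set V} (h : S ⊆ T) :
    nbhd G S ⊆ nbhd G T := by
  rintro v ⟨u, hu, huv⟩; exact ⟨u, h hu, huv⟩

lemma ncard_biUnion_le {V ι : Type*} [Fintype V] (s : Finset ι) (f : ι → Set V) :
    (⋃ i ∈ s, f i).ncard ≤ ∑ i ∈ s, (f i).ncard := by
  classical
  induction s using Finset.induction with
  | empty => simp
  | insert a t hx ih =>
    rw [Finset.set_biUnion_insert, Finset.sum_insert hx]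
    exact le_trans (Set.ncard_union_le _ _) (Nat.add_le_add_left ih _)

/-- For any independent set `I`, there is a minimal vertex cover containing `N(I)`. -/
lemma exists_mvc {V : Type*} [Fintype V] (G : SimpleGraph V) (I : Set V)
    (hI : IsIndepSet G I) :
    ∃ C : Set V, IsMinimalVertexCover G C ∧ nbhd G I ⊆ C ∧
      (nbhd G I).ncard ≤ C.ncard := by
  classical
  set F : Set (Set V) := {J | I ⊆ J ∧ IsIndepSet G J} with hF
  obtain ⟨J, hJF, hmax⟩ := (Set.toFinite F).exists_maximalFor (fun J => J.ncard) F
    ⟨I, Set.Subset.rfl, hI⟩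
  obtain ⟨hIJ, hJind⟩ := hJF
  -- maximality: for w ∉ J, insert w J is not independent
  have hmax' : ∀ w ∉ J, ¬ IsIndepSet G (insert w J) := by
    intro w hw hind
    have h1 : insert w J ∈ F := ⟨hIJ.trans (Set.subset_insert _ _), hind⟩
    have h2 : (insert w J).ncard = J.ncard + 1 :=
      Set.ncard_insert_of_notMem hw (Set.toFinite _)
    have : (insert w J).ncard ≤ J.ncard := hmax h1 (by dsimp only; omega)
    omega
  refine ⟨Jᶜ, ⟨?_, ?_⟩, ?_, ?_⟩
  · intro u v huv
    by_contra h
    push_neg at h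
    simp only [Set.mem_compl_iff, not_not] at h
    exact hJind h.1 h.2 huv
  · intro D hD hDcov
    have hDsub := hD.subset
    obtain ⟨w, hwC, hwD⟩ := (Set.ssubset_iff_of_subset hDsub).mp hD
    have hwJ : w ∉ J := hwC
    have := hmax' w hwJ
    rw [IsIndepSet] at this
    push_neg at this
    obtain ⟨u, hu, v, hv, huv⟩ := this
    rcases hu with rfl | hu
    · rcases hv with rfl | hv
      · exact G.loopless.irrefl _ huv
      · rcases hDcov huv with h | h
        · exact hwD h
        · exact (hDsub h) hv
    · rcases hv with rfl | hv
      · rcases hDcov huv with h | h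
        · exact (hDsub h) hu
        · exact hwD h
      · exact hJind hu hv huv
  · rintro v ⟨u, hu, huv⟩
    intro hvJ
    exact hJind hvJ (hIJ hu) huv
  · refine Set.ncard_le_ncard ?_ (Set.toFinite _)
    rintro v ⟨u, hu, huv⟩
    intro hvJ
    exact hJind hvJ (hIJ hu) huv

/-- Correctness of the √r-approximation scheme for Max Minimal
Vertex Cover: if `L` is independent and `V \ L` is partitioned into `V_1, …, V_r`,
then some block `V_i` contains an independent set `S` with
`r · |N(S ∪ (L \ N(S)))| ≥ μ`, where `μ` is the maximum size of a minimal vertex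
cover; consequently there is a minimal vertex cover of size at least `μ / r`
containing `N(S ∪ (L \ N(S)))`. -/
theorem maxMinimalVertexCover_approx {V : Type*} [Fintype V]
    (G : SimpleGraph V) (L : Set V) (hL : IsIndepSet G L)
    (r : ℕ) (hr : 1 ≤ r) (P : Fin r → Set V)
    (hcover : (⋃ i, P i) = Lᶜ)
    (hdisj : ∀ i j : Fin r, i ≠ j → Disjoint (P i) (P j))
    (μ : ℕ)
    (hμ : IsGreatest {k | ∃ C : Set V, IsMinimalVertexCover G C ∧ C.ncard = k} μ) :
    ∃ i : Fin r, ∃ S : Set V, S ⊆ P i ∧ IsIndepSet G S ∧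
      μ ≤ r * (nbhd G (S ∪ (L \ nbhd G S))).ncard ∧
      ∃ C : Set V, IsMinimalVertexCover G C ∧
        nbhd G (S ∪ (L \ nbhd G S)) ⊆ C ∧ μ ≤ r * C.ncard := by
  classical
  obtain ⟨⟨Cs, hCs, hCscard⟩, _⟩ := hμ
  set R : Set V := Csᶜ with hR
  -- R is independent
  have hRind : IsIndepSet G R := by
    intro u hu v hv huv
    rcases hCs.1 huv with h | h
    · exact hu h
    · exact hv h
  -- C* ⊆ N(R)
  have hCsub : Cs ⊆ nbhd G R := by
    intro v hv
    have hss : Cs \ {v} ⊂ Cs := Set.sdiff_singleton_ssubset.mpr hv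
    have := hCs.2 _ hss
    rw [IsVertexCover] at this
    push_neg at this
    obtain ⟨a, b, hab, ha, hb⟩ := this
    rcases hCs.1 hab with h | h
    · have hav : a = v := by
        by_contra hne
        exact ha ⟨h, hne⟩
      subst hav
      have hbR : b ∈ R := by
        intro hbC
        exact hb ⟨hbC, fun hbv => G.loopless.irrefl a (hbv ▸ hab)⟩
      exact ⟨b, hbR, hab⟩
    · have hbv : b = v := by
        by_contra hne
        exact hb ⟨h, hne⟩
      subst hbv
      have haR : a ∈ R := by
        intro haC
        exact ha ⟨haC, fun hav => G.loopless.irrefl b (hav ▸ hab)⟩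
      exact ⟨a, haR, hab.symm⟩
  -- blocks
  set S : Fin r → Set V := fun i => R ∩ P i with hS
  set T : Fin r → Set V := fun i => nbhd G (S i ∪ (L \ nbhd G (S i))) with hT
  -- N(R) ⊆ ⋃ T i
  have hNR : nbhd G R ⊆ ⋃ i, T i := by
    rintro v ⟨u, hu, huv⟩
    by_cases huL : u ∈ L
    · have i0 : Fin r := ⟨0, hr⟩
      refine Set.mem_iUnion.mpr ⟨i0, ⟨u, Or.inr ⟨huL, ?_⟩, huv⟩⟩
      rintro ⟨w, hw, huw⟩
      exact hRind hu (hw.1) huw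
    · have : u ∈ ⋃ i, P i := hcover ▸ huL
      obtain ⟨i, hi⟩ := Set.mem_iUnion.mp this
      exact Set.mem_iUnion.mpr ⟨i, ⟨u, Or.inl ⟨hu, hi⟩, huv⟩⟩
  -- μ ≤ ∑ |T i|
  have hsum : μ ≤ ∑ i, (T i).ncard := by
    calc μ = Cs.ncard := hCscard.symm
    _ ≤ (nbhd G R).ncard := Set.ncard_le_ncard hCsub (Set.toFinite _)
    _ ≤ (⋃ i, T i).ncard := Set.ncard_le_ncard hNR (Set.toFinite _)
    _ ≤ ∑ i, (T i).ncard := by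
        have := ncard_biUnion_le (Finset.univ : Finset (Fin r)) T
        simpa using this
  -- pick good index
  have hex : ∃ i : Fin r, μ ≤ r * (T i).ncard := by
    by_contra h
    push_neg at h
    have hne : (Finset.univ : Finset (Fin r)).Nonempty := ⟨⟨0, hr⟩, Finset.mem_univ _⟩
    have h1 : r * μ ≤ r * ∑ i, (T i).ncard := Nat.mul_le_mul_left r hsum
    have h2 : ∑ i : Fin r, r * (T i).ncard = r * ∑ i, (T i).ncard := by
      rw [Finset.mul_sum]
    have h3 : ∑ _i : Fin r, μ = r * μ := by simp [mul_comm]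
    have hlt2 : ∑ i : Fin r, r * (T i).ncard < ∑ _i : Fin r, μ :=
      Finset.sum_lt_sum_of_nonempty hne fun i _ => h i
    omega
  obtain ⟨i, hi⟩ := hex
  -- the chosen S i
  have hSi : S i ⊆ P i := Set.inter_subset_right
  have hSind : IsIndepSet G (S i) := fun u hu v hv => hRind hu.1 hv.1
  have hIind : IsIndepSet G (S i ∪ (L \ nbhd G (S i))) := by
    rintro u (hu | hu) v (hv | hv) huv
    · exact hSind hu hv huv
    · exact hv.2 ⟨u, hu, huv.symm⟩
    · exact hu.2 ⟨v, hv, huv⟩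
    · exact hL hu.1 hv.1 huv
  obtain ⟨C, hCmvc, hCsub', hCcard⟩ := exists_mvc G _ hIind
  exact ⟨i, S i, hSi, hSind, hi, C, hCmvc, hCsub',
    le_trans hi (Nat.mul_le_mul_left r hCcard)⟩
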